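/- Let M ∈ ℝ^{n×n} with spectral radius strictly less than 1, C ∈ ℝ^{1×n}, B ∈ ℝ^{n×1}. Then the infimum of BᵀPB over symmetric P ⪰ 0 satisfying MᵀPM − P + CᵀC ⪯ 0 equals Σ_{k=0}^∞ (C M^k B)², and is attained by the unique solution of the Lyapunov equation MᵀPM − P + CᵀC = 0. -/

import Mathlib

open Matrix Filter
open scoped ENNReal NNReal Topology

attribute [local instance] Matrix.linftyOpNormedRing Matrix.linftyOpNormedAlgebra
  Matrix.linftyOpNormedAddCommGroup Matrix.linftyOpNormedSpace

private lemma nnnorm_map_ofReal' {m k : ℕ} (A : Matrix (Fin m) (Fin k) ℝ) :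
    ‖A.map (Complex.ofReal)‖₊ = ‖A‖₊ := by
  simp [Matrix.linfty_opNNNorm_def, Matrix.map_apply]

private lemma entry_nnnorm_le' {a b : ℕ} (A : Matrix (Fin a) (Fin b) ℝ) (i : Fin a) (j : Fin b) :
    ‖A i j‖₊ ≤ ‖A‖₊ := by
  rw [Matrix.linfty_opNNNorm_def]
  calc ‖A i j‖₊ ≤ ∑ j' : Fin b, ‖A i j'‖₊ :=
        Finset.single_le_sum (f := fun j' => ‖A i j'‖₊) (fun _ _ => zero_le) (Finset.mem_univ j)
    _ ≤ _ := Finset.le_sup (f := fun i => ∑ j' : Fin b, ‖A i j'‖₊) (Finset.mem_univ i)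

private lemma nnnorm_transpose_le' {a b : ℕ} (A : Matrix (Fin a) (Fin b) ℝ) :
    ‖Aᵀ‖₊ ≤ a * ‖A‖₊ := by
  rw [Matrix.linfty_opNNNorm_def]
  refine Finset.sup_le fun j _ => ?_
  calc ∑ i : Fin a, ‖Aᵀ j i‖₊ ≤ ∑ _i : Fin a, ‖A‖₊ :=
        Finset.sum_le_sum (fun i _ => entry_nnnorm_le' A i j)
    _ = a * ‖A‖₊ := by simp [mul_comm]

private lemma specrad_lt_one' {n : ℕ} (M : Matrix (Fin n) (Fin n) ℝ)
    (hM : ∀ μ : ℂ, μ ∈ spectrum ℂ (M.map (Complex.ofReal)) → ‖μ‖ < 1) :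
    spectralRadius ℂ (M.map (Complex.ofReal)) < 1 := by
  rcases Set.eq_empty_or_nonempty (spectrum ℂ (M.map (Complex.ofReal))) with h | h
  · simp only [spectralRadius, h]
    simp
  · refine lt_of_lt_of_le (spectrum.spectralRadius_lt_of_forall_lt_of_nonempty h
      (r := 1) fun z hz => ?_) (by simp)
    have := hM z hz
    rw [← NNReal.coe_lt_coe]
    simpa using this

private lemma pow_norm_geom' {n : ℕ} (M : Matrix (Fin n) (Fin n) ℝ)
    (hM : ∀ μ : ℂ, μ ∈ spectrum ℂ (M.map (Complex.ofReal)) → ‖μ‖ < 1) :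
    ∃ c r : ℝ, 0 < c ∧ 0 < r ∧ r < 1 ∧ ∀ k : ℕ, ‖M ^ k‖ ≤ c * r ^ k := by
  set A := M.map (Complex.ofReal) with hA
  have hρ : spectralRadius ℂ A < 1 := specrad_lt_one' M hM
  obtain ⟨r, hρr, hr1⟩ := ENNReal.lt_iff_exists_nnreal_btwn.mp hρ
  have hr1' : r < 1 := by exact_mod_cast hr1
  set s : ℝ≥0 := max r (1/2) with hs
  have hs0 : 0 < s := lt_of_lt_of_le (by norm_num) (le_max_right _ _)
  have hs1 : s < 1 := max_lt hr1' (by rw [← NNReal.coe_lt_coe]; norm_num)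
  have htend := spectrum.pow_nnnorm_pow_one_div_tendsto_nhds_spectralRadius A
  have hev : ∀ᶠ k : ℕ in atTop, (‖A ^ k‖₊ : ℝ≥0∞) ^ (1 / (k:ℝ)) < (r : ℝ≥0∞) :=
    htend.eventually_lt_const hρr
  obtain ⟨N, hN⟩ := (hev.and (eventually_ge_atTop 1)).exists_forall_of_atTop
  have hAk : ∀ k : ℕ, A ^ k = (M ^ k).map (Complex.ofReal) := by
    intro k
    have : A = Complex.ofRealHom.mapMatrix M := rfl
    rw [this, ← map_pow]
    rfl
  have key : ∀ k, N ≤ k → ‖M ^ k‖₊ ≤ s ^ k := by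
    intro k hk
    obtain ⟨h1, h2⟩ := hN k hk
    have hk0 : (k : ℝ) ≠ 0 := Nat.cast_ne_zero.mpr (by omega)
    have hx : (‖A ^ k‖₊ : ℝ≥0∞) = ((‖A ^ k‖₊ : ℝ≥0∞) ^ (1 / (k:ℝ))) ^ (k:ℝ) := by
      rw [← ENNReal.rpow_mul, one_div, inv_mul_cancel₀ hk0, ENNReal.rpow_one]
    have h3 : (‖A ^ k‖₊ : ℝ≥0∞) ≤ (r : ℝ≥0∞) ^ (k : ℝ) := by
      rw [hx]
      exact ENNReal.rpow_le_rpow h1.le (by positivity)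
    rw [ENNReal.rpow_natCast, ← ENNReal.coe_pow, ENNReal.coe_le_coe] at h3
    calc ‖M ^ k‖₊ = ‖A ^ k‖₊ := by rw [hAk, nnnorm_map_ofReal']
    _ ≤ r ^ k := h3
    _ ≤ s ^ k := pow_le_pow_left₀ zero_le (le_max_left _ _) k
  refine ⟨1 + ∑ j ∈ Finset.range N, ‖M ^ j‖ / (s:ℝ) ^ j, (s:ℝ), by positivity, hs0, hs1, ?_⟩
  intro k
  by_cases hk : N ≤ k
  · calc ‖M ^ k‖ ≤ (s:ℝ) ^ k := by
          have := key k hk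
          rw [← NNReal.coe_le_coe] at this
          simpa using this
      _ ≤ (1 + ∑ j ∈ Finset.range N, ‖M ^ j‖ / (s:ℝ) ^ j) * (s:ℝ) ^ k := by
          nlinarith [Finset.sum_nonneg (fun j (_ : j ∈ Finset.range N) =>
            div_nonneg (norm_nonneg (M ^ j)) (by positivity : (0:ℝ) ≤ (s:ℝ) ^ j)),
            pow_pos (show (0:ℝ) < s by exact_mod_cast hs0) k]
  · push_neg at hk
    have hsk : (0:ℝ) < (s:ℝ) ^ k := pow_pos (by exact_mod_cast hs0) k
    have hmem : k ∈ Finset.range N := Finset.mem_range.mpr hk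
    have h1 : ‖M ^ k‖ / (s:ℝ) ^ k ≤ ∑ j ∈ Finset.range N, ‖M ^ j‖ / (s:ℝ) ^ j :=
      Finset.single_le_sum (fun j _ => div_nonneg (norm_nonneg _) (by positivity)) hmem
    rw [div_le_iff₀ hsk] at h1
    nlinarith

/-- The quadratic-form linear functional `X ↦ (Wᵀ * X * W) 0 0`. -/
private noncomputable def quadL' {n : ℕ} (W : Matrix (Fin n) (Fin 1) ℝ) :
    Matrix (Fin n) (Fin n) ℝ →ₗ[ℝ] ℝ where
  toFun X := (Wᵀ * X * W) 0 0
  map_add' X Y := by simp [Matrix.mul_add, Matrix.add_mul]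
  map_smul' c X := by simp [Matrix.mul_smul, Matrix.smul_mul]

/-- `X ↦ Mᵀ * X * M` as a linear map. -/
private noncomputable def lyapL' {n : ℕ} (M : Matrix (Fin n) (Fin n) ℝ) :
    Matrix (Fin n) (Fin n) ℝ →ₗ[ℝ] Matrix (Fin n) (Fin n) ℝ where
  toFun X := Mᵀ * X * M
  map_add' X Y := by simp [Matrix.mul_add, Matrix.add_mul]
  map_smul' c X := by simp [Matrix.mul_smul, Matrix.smul_mul]

/-- transpose as a linear map. -/
private noncomputable def transL' {n : ℕ} :
    Matrix (Fin n) (Fin n) ℝ →ₗ[ℝ] Matrix (Fin n) (Fin n) ℝ where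
  toFun X := Xᵀ
  map_add' X Y := by simp
  map_smul' c X := by simp

private lemma quad_entry' {n : ℕ} (A : Matrix (Fin 1) (Fin n) ℝ) (W : Matrix (Fin n) (Fin 1) ℝ) :
    (Wᵀ * (Aᵀ * A) * W) 0 0 = ((A * W) 0 0) ^ 2 := by
  have h : Wᵀ * (Aᵀ * A) * W = (A * W)ᵀ * (A * W) := by
    rw [Matrix.transpose_mul]
    simp only [Matrix.mul_assoc]
  rw [h, Matrix.mul_apply]
  simp [sq]

private lemma quad_dot' {n : ℕ} (S : Matrix (Fin n) (Fin n) ℝ) (W : Matrix (Fin n) (Fin 1) ℝ) :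
    (Wᵀ * S * W) 0 0 = (fun i => W i 0) ⬝ᵥ S *ᵥ (fun i => W i 0) := by
  simp only [Matrix.mul_apply, Matrix.transpose_apply, dotProduct, Matrix.mulVec,
    Finset.sum_mul, Finset.mul_sum]
  rw [Finset.sum_comm]
  refine Finset.sum_congr rfl fun i _ => Finset.sum_congr rfl fun j _ => by ring

private lemma quad_nonneg' {n : ℕ} {S : Matrix (Fin n) (Fin n) ℝ} (hS : S.PosSemidef)
    (W : Matrix (Fin n) (Fin 1) ℝ) : 0 ≤ (Wᵀ * S * W) 0 0 := by
  rw [quad_dot']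
  have := hS.dotProduct_mulVec_nonneg (fun i => W i 0)
  simpa using this

private lemma quadL'_apply {n : ℕ} (W : Matrix (Fin n) (Fin 1) ℝ) (X : Matrix (Fin n) (Fin n) ℝ) :
    quadL' W X = (Wᵀ * X * W) 0 0 := rfl

private lemma lyapL'_apply {n : ℕ} (M X : Matrix (Fin n) (Fin n) ℝ) :
    lyapL' M X = Mᵀ * X * M := rfl

private lemma transL'_apply {n : ℕ} (X : Matrix (Fin n) (Fin n) ℝ) :
    transL' X = Xᵀ := rfl

private lemma norm_transpose_le' {a b : ℕ} (A : Matrix (Fin a) (Fin b) ℝ) :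
    ‖Aᵀ‖ ≤ (a : ℝ) * ‖A‖ := by
  have := nnnorm_transpose_le' A
  rw [← NNReal.coe_le_coe] at this
  push_cast at this
  simpa using this

theorem stmt_18 (n : ℕ) (M : Matrix (Fin n) (Fin n) ℝ)
    (hM : ∀ μ : ℂ, μ ∈ spectrum ℂ (M.map (Complex.ofReal)) → ‖μ‖ < 1)
    (B : Matrix (Fin n) (Fin 1) ℝ) (C : Matrix (Fin 1) (Fin n) ℝ) :
    IsLeast {x : ℝ | ∃ P : Matrix (Fin n) (Fin n) ℝ, P.PosSemidef ∧
        (-(Mᵀ * P * M - P + Cᵀ * C)).PosSemidef ∧ x = (Bᵀ * P * B) 0 0}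
      (∑' k : ℕ, ((C * M ^ k * B) 0 0) ^ 2) ∧
    ∃! P : Matrix (Fin n) (Fin n) ℝ, Mᵀ * P * M - P + Cᵀ * C = 0 ∧
      P.PosSemidef ∧ (Bᵀ * P * B) 0 0 = ∑' k : ℕ, ((C * M ^ k * B) 0 0) ^ 2 := by
  classical
  obtain ⟨c, r, hc, hr0, hr1, hgeo⟩ := pow_norm_geom' M hM
  set f : ℕ → Matrix (Fin n) (Fin n) ℝ := fun k => (C * M ^ k)ᵀ * (C * M ^ k) with hfdef
  have hX : ∀ k, ‖C * M ^ k‖ ≤ ‖C‖ * (c * r ^ k) := fun k =>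
    le_trans (Matrix.linfty_opNorm_mul _ _)
      (mul_le_mul_of_nonneg_left (hgeo k) (norm_nonneg C))
  have hfb : ∀ k : ℕ, ‖f k‖ ≤ (‖C‖ * c) ^ 2 * (r ^ 2) ^ k := by
    intro k
    have h1 : ‖(C * M ^ k)ᵀ‖ ≤ ‖C * M ^ k‖ := by
      have := norm_transpose_le' (C * M ^ k)
      simpa using this
    have h2 := hX k
    have h3 : (0:ℝ) ≤ ‖C * M ^ k‖ := norm_nonneg _
    have h4 : (0:ℝ) ≤ ‖C‖ * (c * r ^ k) := le_trans h3 h2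
    calc ‖f k‖ ≤ ‖(C * M ^ k)ᵀ‖ * ‖C * M ^ k‖ := Matrix.linfty_opNorm_mul _ _
      _ ≤ ‖C * M ^ k‖ * ‖C * M ^ k‖ := mul_le_mul_of_nonneg_right h1 h3
      _ ≤ (‖C‖ * (c * r ^ k)) * (‖C‖ * (c * r ^ k)) := mul_le_mul h2 h2 h3 h4
      _ = (‖C‖ * c) ^ 2 * (r ^ 2) ^ k := by ring
  have hsum : Summable f := by
    refine Summable.of_norm_bounded (Summable.mul_left ((‖C‖ * c) ^ 2) ?_) hfb
    exact summable_geometric_of_lt_one (by positivity) (by nlinarith)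
  set P : Matrix (Fin n) (Fin n) ℝ := ∑' k, f k with hPdef
  have hP : HasSum f P := hsum.hasSum
  -- the Lyapunov equation
  have hstep : ∀ k, Mᵀ * f k * M = f (k + 1) := by
    intro k
    simp only [hfdef, pow_succ, Matrix.transpose_mul, Matrix.mul_assoc, Matrix.transpose_pow]
    rw [← Matrix.mul_assoc Mᵀ (Mᵀ ^ k), ← pow_mul_comm', Matrix.mul_assoc]
  have h1 : HasSum (fun k => f (k + 1)) (Mᵀ * P * M) := by
    have h := hP.mapL (lyapL' M).toContinuousLinearMap
    simp only [LinearMap.coe_toContinuousLinearMap', lyapL'_apply] at h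
    simpa only [hstep] using h
  have hf0 : f 0 = Cᵀ * C := by simp [hfdef]
  have hPeq : P = Mᵀ * P * M + Cᵀ * C := by
    have h2 : HasSum f (Mᵀ * P * M + Cᵀ * C) := by
      have := (hasSum_nat_add_iff (f := f) 1).mp h1
      simpa [hf0] using this
    exact hP.unique h2
  have hLyap : Mᵀ * P * M - P + Cᵀ * C = 0 := by
    have h : Mᵀ * P * M - P + Cᵀ * C = (Mᵀ * P * M + Cᵀ * C) - P := by abel
    rw [h, ← hPeq, sub_self]
  -- positive semidefiniteness
  have hPsd : P.PosSemidef := by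
    refine Matrix.PosSemidef.of_dotProduct_mulVec_nonneg ?_ ?_
    · show Pᴴ = P
      rw [Matrix.conjTranspose_eq_transpose_of_trivial]
      have h := hP.mapL (transL' (n := n)).toContinuousLinearMap
      simp only [LinearMap.coe_toContinuousLinearMap', transL'_apply] at h
      have hsymm : ∀ k, (f k)ᵀ = f k := fun k => by
        simp [hfdef, Matrix.transpose_mul]
      rw [show (fun k => (f k)ᵀ) = f from funext hsymm] at h
      exact h.unique hP
    · intro x
      set W : Matrix (Fin n) (Fin 1) ℝ := Matrix.replicateCol (Fin 1) x with hW
      have h := hP.mapL (quadL' W).toContinuousLinearMap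
      simp only [LinearMap.coe_toContinuousLinearMap', quadL'_apply] at h
      have hterm : ∀ k, (Wᵀ * f k * W) 0 0 = ((C * M ^ k * W) 0 0) ^ 2 := fun k => by
        rw [hfdef]; exact quad_entry' (C * M ^ k) W
      rw [show (fun k => (Wᵀ * f k * W) 0 0) = fun k => ((C * M ^ k * W) 0 0) ^ 2 from
        funext hterm] at h
      have hnn : 0 ≤ (Wᵀ * P * W) 0 0 := h.nonneg fun k => sq_nonneg _
      rw [quad_dot'] at hnn
      simpa [hW] using hnn
  -- the value
  have hVal : (Bᵀ * P * B) 0 0 = ∑' k : ℕ, ((C * M ^ k * B) 0 0) ^ 2 := by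
    have h := hP.mapL (quadL' B).toContinuousLinearMap
    simp only [LinearMap.coe_toContinuousLinearMap', quadL'_apply] at h
    have hterm : ∀ k, (Bᵀ * f k * B) 0 0 = ((C * M ^ k * B) 0 0) ^ 2 := fun k => by
      rw [hfdef]; exact quad_entry' (C * M ^ k) B
    rw [show (fun k => (Bᵀ * f k * B) 0 0) = fun k => ((C * M ^ k * B) 0 0) ^ 2 from
      funext hterm] at h
    exact h.tsum_eq.symm
  refine ⟨⟨⟨P, hPsd, by rw [hLyap, neg_zero]; exact Matrix.PosSemidef.zero, hVal.symm⟩, ?_⟩, ?_⟩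
  · -- lower bound
    rintro x ⟨Q, hQpsd, hQS, rfl⟩
    set G : ℕ → ℝ := fun N => ((M ^ N * B)ᵀ * Q * (M ^ N * B)) 0 0 with hG
    have hGnn : ∀ N, 0 ≤ G N := fun N => quad_nonneg' hQpsd _
    have hstepG : ∀ N, ((C * M ^ N * B) 0 0) ^ 2 + G (N + 1) ≤ G N := by
      intro N
      have h0 := quad_nonneg' hQS (M ^ N * B)
      set W := M ^ N * B with hWdef
      have e1 : (Wᵀ * (-(Mᵀ * Q * M - Q + Cᵀ * C)) * W) 0 0
          = -(((Wᵀ * (Mᵀ * Q * M) * W) 0 0) - ((Wᵀ * Q * W) 0 0)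
              + ((Wᵀ * (Cᵀ * C) * W) 0 0)) := by
        simp [Matrix.mul_add, Matrix.add_mul, Matrix.mul_sub, Matrix.sub_mul,
          Matrix.neg_mul, Matrix.mul_neg, Matrix.neg_apply, Matrix.sub_apply, Matrix.add_apply]
      have e2 : (Wᵀ * (Mᵀ * Q * M) * W) 0 0 = G (N + 1) := by
        have h : Wᵀ * (Mᵀ * Q * M) * W = (M * W)ᵀ * Q * (M * W) := by
          simp [Matrix.transpose_mul, Matrix.mul_assoc]
        rw [h]
        have hMW : M * W = M ^ (N + 1) * B := by
          rw [hWdef, ← Matrix.mul_assoc, ← pow_succ']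
        rw [hMW]
      have e3 : (Wᵀ * (Cᵀ * C) * W) 0 0 = ((C * M ^ N * B) 0 0) ^ 2 := by
        rw [quad_entry' C W, hWdef, ← Matrix.mul_assoc]
      have e4 : (Wᵀ * Q * W) 0 0 = G N := rfl
      rw [e1, e2, e3, e4] at h0
      linarith
    have hind : ∀ N, (∑ k ∈ Finset.range N, ((C * M ^ k * B) 0 0) ^ 2) + G N ≤ G 0 := by
      intro N
      induction N with
      | zero => simp
      | succ N ih =>
        rw [Finset.sum_range_succ]
        have := hstepG N
        linarith
    have hG0 : G 0 = (Bᵀ * Q * B) 0 0 := by simp [hG]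
    refine Real.tsum_le_of_sum_range_le (fun k => sq_nonneg _) fun N => ?_
    have h1 := hind N
    have h2 := hGnn N
    rw [hG0] at h1
    linarith
  · -- unique solution of the Lyapunov equation
    refine ⟨P, ⟨hLyap, hPsd, hVal⟩, ?_⟩
    rintro Q ⟨hQ1, -, -⟩
    have hD0 : Mᵀ * (Q - P) * M - (Q - P) = 0 := by
      have h : Mᵀ * (Q - P) * M - (Q - P)
          = (Mᵀ * Q * M - Q + Cᵀ * C) - (Mᵀ * P * M - P + Cᵀ * C) := by
        rw [Matrix.mul_sub, Matrix.sub_mul]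
        abel
      rw [h, hQ1, hLyap, sub_zero]
    have hDeq : Mᵀ * (Q - P) * M = Q - P := by
      have := sub_eq_zero.mp hD0
      exact this
    have hDk : ∀ k, (Mᵀ) ^ k * (Q - P) * M ^ k = Q - P := by
      intro k
      induction k with
      | zero => simp
      | succ k ih =>
        calc (Mᵀ) ^ (k+1) * (Q - P) * M ^ (k+1)
            = (Mᵀ) ^ k * (Mᵀ * (Q - P) * M) * M ^ k := by
              rw [pow_succ, pow_succ']
              simp only [Matrix.mul_assoc]
          _ = Q - P := by rw [hDeq, ih]
    have hDb : ∀ k : ℕ, ‖Q - P‖ ≤ ((n : ℝ) * c ^ 2 * ‖Q - P‖) * (r ^ 2) ^ k := by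
      intro k
      have h1 : ‖(Mᵀ) ^ k‖ ≤ (n : ℝ) * ‖M ^ k‖ := by
        rw [← Matrix.transpose_pow]
        exact norm_transpose_le' (M ^ k)
      have h2 := hgeo k
      have h3 : (0:ℝ) ≤ ‖M ^ k‖ := norm_nonneg _
      have h4 : (0:ℝ) ≤ ‖Q - P‖ := norm_nonneg _
      have h5 : ‖Q - P‖ ≤ ‖(Mᵀ) ^ k‖ * ‖Q - P‖ * ‖M ^ k‖ := by
        calc ‖Q - P‖ = ‖(Mᵀ) ^ k * (Q - P) * M ^ k‖ := by rw [hDk k]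
          _ ≤ ‖(Mᵀ) ^ k * (Q - P)‖ * ‖M ^ k‖ := Matrix.linfty_opNorm_mul _ _
          _ ≤ ‖(Mᵀ) ^ k‖ * ‖Q - P‖ * ‖M ^ k‖ :=
            mul_le_mul_of_nonneg_right (Matrix.linfty_opNorm_mul _ _) h3
      have h6 : (0:ℝ) ≤ (n : ℝ) := Nat.cast_nonneg n
      have h7 : (0:ℝ) ≤ ‖(Mᵀ) ^ k‖ := norm_nonneg _
      calc ‖Q - P‖ ≤ ‖(Mᵀ) ^ k‖ * ‖Q - P‖ * ‖M ^ k‖ := h5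
        _ ≤ ((n : ℝ) * (c * r ^ k)) * ‖Q - P‖ * (c * r ^ k) := by
            have hnk : ‖(Mᵀ) ^ k‖ ≤ (n : ℝ) * (c * r ^ k) :=
              h1.trans (mul_le_mul_of_nonneg_left h2 h6)
            have hnk0 : (0:ℝ) ≤ (n : ℝ) * (c * r ^ k) := le_trans h7 hnk
            exact mul_le_mul (mul_le_mul_of_nonneg_right hnk h4) h2 h3
              (mul_nonneg hnk0 h4)
        _ = ((n : ℝ) * c ^ 2 * ‖Q - P‖) * (r ^ 2) ^ k := by ring
    have htend : Filter.Tendsto (fun k : ℕ => ((n : ℝ) * c ^ 2 * ‖Q - P‖) * (r ^ 2) ^ k)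
        atTop (𝓝 0) := by
      have h := tendsto_pow_atTop_nhds_zero_of_lt_one (by positivity : (0:ℝ) ≤ r ^ 2)
        (by nlinarith : r ^ 2 < 1)
      simpa using h.const_mul ((n : ℝ) * c ^ 2 * ‖Q - P‖)
    have hle : ‖Q - P‖ ≤ 0 := ge_of_tendsto htend (Filter.Eventually.of_forall hDb)
    have : Q - P = 0 := by
      rw [← norm_le_zero_iff]
      exact hle
    exact sub_eq_zero.mp this
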